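/- Let B be a base of a matroid M obtained by the following procedure: starting from the full ground set, repeatedly pick a circuit of the current set and remove a minimum-weight element of it, until no circuit remains. Then B is a maximum-weight base: for every base B' of M, ∑_{e∈B'} w(e) ≤ ∑_{e∈B} w(e). -/

import Mathlib

open Classical Finset

/-- Weighted rank function of a matroid: maximum weight of an independent subset. -/
noncomputable def phi {α : Type*} (M : Matroid α) (w : α → ℝ) (A : Finset α) : ℝ :=
  sSup {x : ℝ | ∃ I : Finset α, ↑I ⊆ (A : Set α) ∧ M.Indep ↑I ∧ x = ∑ a ∈ I, w a}

/-- A circuit: a minimal dependent set. -/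
def IsCircuit {α : Type*} (M : Matroid α) (C : Set α) : Prop :=
  M.Dep C ∧ ∀ D ⊂ C, ¬ M.Dep D

/-- With full ground set, non-dependent means independent. -/
lemma indep_of_not_dep {α : Type*} (M : Matroid α) (hE : M.E = Set.univ)
    (X : Set α) (h : ¬ M.Dep X) : M.Indep X := by
  by_contra h'
  exact h ⟨h', by rw [hE]; exact Set.subset_univ _⟩

/-- Exchange step: removing a minimum-weight element of a circuit from `A`
does not decrease the maximum weight of an independent subset. -/
lemma step_exchange {α : Type*} [DecidableEq α] (M : Matroid α) (hE : M.E = Set.univ)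
    (w : α → ℝ) (hw : ∀ a, 0 ≤ w a) (A C : Finset α) (e : α)
    (hC : IsCircuit M ↑C) (hCA : C ⊆ A) (heC : e ∈ C) (hmin : ∀ c ∈ C, w e ≤ w c)
    (I : Finset α) (hI : M.Indep ↑I) (hIA : I ⊆ A) :
    ∃ J : Finset α, M.Indep ↑J ∧ J ⊆ A.erase e ∧ ∑ a ∈ I, w a ≤ ∑ a ∈ J, w a := by
  by_cases heI : e ∈ I
  · set I₀ := I.erase e with hI₀def
    have hI₀coe : (↑I₀ : Set α) = ↑I \ {e} := Finset.coe_erase _ _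
    have hI₀ : M.Indep ↑I₀ := by
      rw [hI₀coe]; exact hI.subset Set.diff_subset
    have hecl : e ∉ M.closure ↑I₀ := by
      rw [hI₀coe]
      exact hI.notMem_closure_sdiff_of_mem (by exact_mod_cast heI)
    -- C \ {e} is independent
    have hCe_indep : M.Indep (↑C \ {e} : Set α) := by
      apply indep_of_not_dep M hE
      apply hC.2
      exact Set.sdiff_singleton_ssubset.mpr (by exact_mod_cast heC)
    have hecl2 : e ∈ M.closure (↑C \ {e} : Set α) := by
      have hdep : M.Dep (insert e (↑C \ {e} : Set α)) := by
        rw [Set.insert_diff_singleton, Set.insert_eq_of_mem (by exact_mod_cast heC)]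
        exact hC.1
      exact Set.mem_of_mem_diff (hCe_indep.insert_dep_iff.mp hdep)
    -- find f ∈ C \ {e}, f ∉ I₀, with insert f I₀ independent
    have hfex : ∃ f ∈ C, f ≠ e ∧ f ∉ I₀ ∧ M.Indep (insert f (↑I₀ : Set α)) := by
      by_contra hno
      push_neg at hno
      have hsub : (↑C \ {e} : Set α) ⊆ M.closure ↑I₀ := by
        intro f hf
        obtain ⟨hfC, hfe⟩ := hf
        have hfC' : f ∈ C := by exact_mod_cast hfC
        have hfe' : f ≠ e := hfe
        by_cases hfI : f ∈ I₀
        · exact M.subset_closure ↑I₀ (by rw [hE]; exact Set.subset_univ _) (by exact_mod_cast hfI)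
        · have hnind := hno f hfC' hfe' hfI
          have hdep : M.Dep (insert f (↑I₀ : Set α)) :=
            ⟨hnind, by rw [hE]; exact Set.subset_univ _⟩
          exact hI₀.mem_closure_iff.mpr (Or.inl hdep)
      exact hecl (M.closure_subset_closure_of_subset_closure hsub hecl2)
    obtain ⟨f, hfC, hfe, hfI₀, hfind⟩ := hfex
    refine ⟨insert f I₀, by rw [Finset.coe_insert]; exact hfind, ?_, ?_⟩
    · intro x hx
      rcases Finset.mem_insert.mp hx with rfl | hx
      · exact Finset.mem_erase.mpr ⟨hfe, hCA hfC⟩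
      · exact Finset.erase_subset_erase e hIA hx
    · rw [Finset.sum_insert hfI₀, ← Finset.add_sum_erase _ w heI]
      exact add_le_add (hmin f hfC) le_rfl
  · exact ⟨I, hI, Finset.subset_erase.mpr ⟨hIA, heI⟩, le_refl _⟩

theorem greedy_removal_max_base {α : Type*} [Fintype α] [DecidableEq α]
    (M : Matroid α) (hE : M.E = Set.univ) (w : α → ℝ) (hw : ∀ a, 0 ≤ w a)
    (n : ℕ) (S : ℕ → Finset α) (hS0 : S 0 = Finset.univ)
    (hstep : ∀ k < n, ∃ (C : Finset α) (e : α), IsCircuit M ↑C ∧ C ⊆ S k ∧ e ∈ C ∧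
      (∀ c ∈ C, w e ≤ w c) ∧ S (k + 1) = (S k).erase e)
    (hend : ∀ C : Finset α, C ⊆ S n → ¬ IsCircuit M ↑C) :
    M.IsBase ↑(S n) ∧ ∀ B' : Finset α, M.IsBase ↑B' → ∑ e ∈ B', w e ≤ ∑ e ∈ S n, w e := by
  -- S n is independent
  have hSn_indep : M.Indep ↑(S n) := by
    apply indep_of_not_dep M hE
    intro hdep
    -- find a minimal dependent finset inside S n : a circuit
    have hex : ∃ C : Finset α, C ⊆ S n ∧ M.Dep ↑C := ⟨S n, subset_rfl, hdep⟩
    obtain ⟨m, ⟨C, hCS, hCdep⟩, hmmin⟩ :=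
      Nat.lt_wfRel.wf.has_min
        {m : ℕ | ∃ C : Finset α, C ⊆ S n ∧ M.Dep ↑C ∧ C.card = m}
        ⟨(S n).card, S n, subset_rfl, hdep, rfl⟩
    obtain ⟨hCdep, hCcard⟩ := hCdep
    refine hend C hCS ⟨hCdep, fun D hD hDdep ↦ ?_⟩
    have hDfin : D.Finite := (C.finite_toSet.subset hD.subset)
    have hD' : hDfin.toFinset ⊆ C := by
      intro x hx
      have := hDfin.mem_toFinset.mp hx
      exact_mod_cast hD.subset this
    have hDne : hDfin.toFinset ≠ C := by
      intro h
      apply hD.ne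
      rw [← hDfin.coe_toFinset, h]
    have hcard : hDfin.toFinset.card < C.card :=
      Finset.card_lt_card (lt_of_le_of_ne hD' hDne)
    exact hmmin hDfin.toFinset.card
      ⟨hDfin.toFinset, hD'.trans hCS, by rwa [hDfin.coe_toFinset], rfl⟩
      (hCcard ▸ hcard)
  -- closure of S k is everything, for all k ≤ n
  have hclos : ∀ k ≤ n, M.closure ↑(S k) = M.E := by
    intro k hk
    induction k with
    | zero =>
      rw [hS0]
      simpa [← hE] using M.closure_ground
    | succ k ih =>
      obtain ⟨C, e, hC, hCS, heC, hmin, hSe⟩ := hstep k (Nat.lt_of_succ_le hk)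
      have ih' := ih (Nat.le_of_succ_le hk)
      have hCe_indep : M.Indep (↑C \ {e} : Set α) := by
        apply indep_of_not_dep M hE
        apply hC.2
        exact Set.sdiff_singleton_ssubset.mpr (by exact_mod_cast heC)
      have hecl : e ∈ M.closure (↑C \ {e} : Set α) := by
        have hdep : M.Dep (insert e (↑C \ {e} : Set α)) := by
          rw [Set.insert_diff_singleton, Set.insert_eq_of_mem (by exact_mod_cast heC)]
          exact hC.1
        exact Set.mem_of_mem_diff (hCe_indep.insert_dep_iff.mp hdep)
      have hecl2 : e ∈ M.closure (↑(S (k+1)) : Set α) := by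
        rw [hSe, Finset.coe_erase]
        exact M.closure_subset_closure
          (Set.diff_subset_diff_left (by exact_mod_cast hCS)) hecl
      have : M.closure ↑(S k) ⊆ M.closure ↑(S (k+1)) := by
        apply M.closure_subset_closure_of_subset_closure
        intro x hx
        by_cases hxe : x = e
        · exact hxe ▸ hecl2
        · apply M.subset_closure _ (by rw [hE]; exact Set.subset_univ _)
          rw [hSe, Finset.coe_erase]
          exact ⟨hx, hxe⟩
      exact subset_antisymm (M.closure_subset_ground _) (ih' ▸ this)
  have hbase : M.IsBase ↑(S n) :=
    hSn_indep.isBase_of_ground_subset_closure (le_of_eq (hclos n le_rfl).symm)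
  refine ⟨hbase, fun B' hB' ↦ ?_⟩
  -- weight induction: any independent set's weight is matched inside S k
  have key : ∀ k ≤ n, ∃ J : Finset α, M.Indep ↑J ∧ J ⊆ S k ∧
      ∑ a ∈ B', w a ≤ ∑ a ∈ J, w a := by
    intro k hk
    induction k with
    | zero =>
      exact ⟨B', hB'.indep, by rw [hS0]; exact Finset.subset_univ _, le_refl _⟩
    | succ k ih =>
      obtain ⟨J, hJind, hJS, hJw⟩ := ih (Nat.le_of_succ_le hk)
      obtain ⟨C, e, hC, hCS, heC, hmin, hSe⟩ := hstep k (Nat.lt_of_succ_le hk)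
      obtain ⟨J', hJ'ind, hJ'S, hJ'w⟩ :=
        step_exchange M hE w hw (S k) C e hC hCS heC hmin J hJind hJS
      exact ⟨J', hJ'ind, hSe ▸ hJ'S, hJw.trans hJ'w⟩
  obtain ⟨J, hJind, hJS, hJw⟩ := key n le_rfl
  exact hJw.trans (Finset.sum_le_sum_of_subset_of_nonneg hJS fun i _ _ ↦ hw i)
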